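/- Let G be an r-regular simple graph with n vertices and m edges, where r ≥ 2 (so that m ≥ n), and let q_1 ≤ q_2 ≤ … ≤ q_n = 2r be the eigenvalues of Q(G) listed with multiplicity. Then f(λ, G^{+0+}) = [λ² - (2+3r)λ + 4r]·(λ-2)^{m-n}·∏_{i=1}^{n-1}[(λ-2)(λ-r-q_i) - q_i]. -/

import Mathlib

open Classical

/-- The four symbols `0, 1, +, -` used in `xyz`-transformations. -/
inductive XYZ : Type
  | zero | one | plus | minus

namespace XYZ

/-- The relation on the vertices of a graph `H` given by a symbol:
`0` gives the empty graph, `1` the complete graph, `+` the graph itself,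
`-` its complement. -/
def rel {W : Type*} (H : SimpleGraph W) : XYZ → W → W → Prop
  | .zero => fun _ _ => False
  | .one  => fun u v => u ≠ v
  | .plus => fun u v => H.Adj u v
  | .minus => fun u v => u ≠ v ∧ ¬ H.Adj u v

/-- The incidence relation between a vertex and an edge given by a symbol `z`:
`+` means incident, `-` means non-incident, `0` never, `1` always. -/
def inc {W : Type*} (G : SimpleGraph W) : XYZ → W → G.edgeSet → Prop
  | .zero => fun _ _ => False
  | .one  => fun _ _ => True
  | .plus => fun v e => v ∈ (e : Sym2 W)
  | .minus => fun v e => v ∉ (e : Sym2 W)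

theorem rel_symm {W : Type*} (H : SimpleGraph W) (x : XYZ) {u v : W}
    (h : rel H x u v) : rel H x v u := by
  cases x with
  | zero => exact h.elim
  | one => exact (h : u ≠ v).symm
  | plus => exact H.symm.symm _ _ h
  | minus => exact ⟨(h.1).symm, fun h' => h.2 (H.symm.symm _ _ h')⟩

theorem rel_irrefl {W : Type*} (H : SimpleGraph W) (x : XYZ) {u : W}
    (h : rel H x u u) : False := by
  cases x with
  | zero => exact h
  | one => exact h rfl
  | plus => exact H.loopless.irrefl u h
  | minus => exact h.1 rfl

end XYZ

/-- The `xyz`-transformation `G^{xyz}` of a graph `G`: its vertex set is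
`V(G) ⊕ E(G)`; two vertices of `G` are adjacent according to the symbol `x`
(applied to `G`), two edges according to the symbol `y` (applied to the line
graph of `G`), and a vertex and an edge according to the symbol `z`
(`+` = incidence graph `B(G)`, `-` = non-incidence graph `B^c(G)`,
`0` = no vertex-edge edges, `1` = all vertex-edge edges). -/
def xyzTransform {V : Type*} (G : SimpleGraph V) (x y z : XYZ) :
    SimpleGraph (V ⊕ G.edgeSet) where
  Adj a b :=
    match a, b with
    | Sum.inl u, Sum.inl v => XYZ.rel G x u v
    | Sum.inr e, Sum.inr f => XYZ.rel G.lineGraph y e f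
    | Sum.inl v, Sum.inr e => XYZ.inc G z v e
    | Sum.inr e, Sum.inl v => XYZ.inc G z v e
  symm := by
    constructor
    rintro (u | e) (v | f) h
    · exact XYZ.rel_symm G x h
    · exact h
    · exact h
    · exact XYZ.rel_symm G.lineGraph y h
  loopless := by
    constructor
    rintro (u | e) h
    · exact XYZ.rel_irrefl G x h
    · exact XYZ.rel_irrefl G.lineGraph y h

/-- The signless Laplacian matrix `Q(G) = D(G) + A(G)` of a graph. -/
noncomputable def signlessLaplacian {V : Type*} [Fintype V] (G : SimpleGraph V) :
    Matrix V V ℝ :=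
  Matrix.of fun u v =>
    (if u = v then (G.degree u : ℝ) else 0) + (if G.Adj u v then 1 else 0)

/-- The signless Laplacian characteristic polynomial
`f(λ, G) = det (λ I - Q(G))`, evaluated at a real number `λ`. -/
noncomputable def fQ {V : Type*} [Fintype V] (G : SimpleGraph V) (lam : ℝ) : ℝ :=
  Matrix.det (lam • (1 : Matrix V V ℝ) - signlessLaplacian G)

section Aux
variable {V : Type*} [Fintype V] (G : SimpleGraph V)

lemma aux_card_incident (v : V) :
    Fintype.card {e : G.edgeSet // v ∈ (e : Sym2 V)} = G.degree v := by
  classical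
  rw [← SimpleGraph.card_incidenceSet_eq_degree]
  exact Fintype.card_congr
    { toFun := fun p => ⟨p.1.1, p.1.2, p.2⟩
      invFun := fun p => ⟨⟨p.1, p.2.1⟩, p.2.2⟩
      left_inv := fun p => rfl
      right_inv := fun p => rfl }

lemma aux_sum_incident (v : V) :
    (∑ e : G.edgeSet, (if v ∈ (e : Sym2 V) then (1:ℕ) else 0)) = G.degree v := by
  classical
  rw [← Finset.card_filter, ← Fintype.card_subtype, aux_card_incident]

lemma aux_sum_adj (v : V) :
    (∑ u : V, (if G.Adj v u then (1:ℕ) else 0)) = G.degree v := by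
  classical
  rw [← Finset.card_filter, ← SimpleGraph.neighborFinset_eq_filter, SimpleGraph.degree]

lemma aux_sum_mem_edge (e : G.edgeSet) :
    (∑ u : V, (if u ∈ (e : Sym2 V) then (1:ℕ) else 0)) = 2 := by
  classical
  obtain ⟨e, he⟩ := e
  induction e with
  | _ a b =>
    have hab : a ≠ b := (G.mem_edgeSet.mp he).ne
    rw [← Finset.card_filter]
    have : (Finset.univ.filter fun u : V => u ∈ (↑(⟨s(a,b), he⟩ : G.edgeSet) : Sym2 V)) = {a, b} := by
      ext u
      simp [Sym2.mem_iff]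
    rw [this, Finset.card_insert_of_notMem (by simp [hab]), Finset.card_singleton]

lemma aux_deg_inl (v : V) :
    (xyzTransform G XYZ.plus XYZ.zero XYZ.plus).degree (Sum.inl v)
      = G.degree v + G.degree v := by
  classical
  rw [SimpleGraph.degree, SimpleGraph.neighborFinset_eq_filter, Finset.card_filter,
    Fintype.sum_sum_type]
  have h1 : (∑ u : V,
      (if (xyzTransform G XYZ.plus XYZ.zero XYZ.plus).Adj (Sum.inl v) (Sum.inl u) then (1:ℕ) else 0))
      = G.degree v := by
    rw [← aux_sum_adj G v]
    exact Finset.sum_congr rfl fun u _ => by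
      congr 1
  have h2 : (∑ e : G.edgeSet,
      (if (xyzTransform G XYZ.plus XYZ.zero XYZ.plus).Adj (Sum.inl v) (Sum.inr e) then (1:ℕ) else 0))
      = G.degree v := by
    rw [← aux_sum_incident G v]
    exact Finset.sum_congr rfl fun e _ => by congr 1
  rw [h1, h2]

lemma aux_deg_inr (e : G.edgeSet) :
    (xyzTransform G XYZ.plus XYZ.zero XYZ.plus).degree (Sum.inr e) = 2 := by
  classical
  rw [SimpleGraph.degree, SimpleGraph.neighborFinset_eq_filter, Finset.card_filter,
    Fintype.sum_sum_type]
  have h1 : (∑ u : V,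
      (if (xyzTransform G XYZ.plus XYZ.zero XYZ.plus).Adj (Sum.inr e) (Sum.inl u) then (1:ℕ) else 0))
      = 2 := by
    rw [← aux_sum_mem_edge G e]
    exact Finset.sum_congr rfl fun u _ => by congr 1
  have h2 : (∑ f : G.edgeSet,
      (if (xyzTransform G XYZ.plus XYZ.zero XYZ.plus).Adj (Sum.inr e) (Sum.inr f) then (1:ℕ) else 0))
      = 0 := by
    refine Finset.sum_eq_zero fun f _ => ?_
    simp [xyzTransform, XYZ.rel]
  rw [h1, h2]

end Aux
noncomputable def incMat {V : Type*} [Fintype V] (G : SimpleGraph V) :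
    Matrix V G.edgeSet ℝ :=
  Matrix.of fun v e => if v ∈ (e : Sym2 V) then 1 else 0

lemma incMat_mul_transpose {V : Type*} [Fintype V] (G : SimpleGraph V) :
    incMat G * (incMat G).transpose = signlessLaplacian G := by
  classical
  ext u v
  simp only [Matrix.mul_apply, Matrix.transpose_apply, incMat, Matrix.of_apply,
    signlessLaplacian]
  rcases eq_or_ne u v with rfl | huv
  · have h := aux_sum_incident G u
    have h2 : (∑ e : G.edgeSet,
        ((if u ∈ (e : Sym2 V) then (1:ℝ) else 0) * (if u ∈ (e : Sym2 V) then (1:ℝ) else 0)))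
        = ((∑ e : G.edgeSet, (if u ∈ (e : Sym2 V) then (1:ℕ) else 0) : ℕ) : ℝ) := by
      push_cast
      exact Finset.sum_congr rfl fun e _ => by
        by_cases hh : u ∈ (e : Sym2 V) <;> simp [hh]
    rw [h2, h]
    simp [G.irrefl]
  · have h2 : ∀ e : G.edgeSet,
        ((if u ∈ (e : Sym2 V) then (1:ℝ) else 0) * (if v ∈ (e : Sym2 V) then (1:ℝ) else 0))
        = if (u ∈ (e : Sym2 V) ∧ v ∈ (e : Sym2 V)) then (1:ℝ) else 0 := fun e => by
      by_cases ha : u ∈ (e : Sym2 V) <;> by_cases hb : v ∈ (e : Sym2 V) <;> simp [ha, hb]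
    rw [Finset.sum_congr rfl fun e _ => h2 e, Finset.sum_boole]
    by_cases hadj : G.Adj u v
    · have hfil : (Finset.univ.filter
          fun e : G.edgeSet => u ∈ (e : Sym2 V) ∧ v ∈ (e : Sym2 V)) = {⟨s(u,v), hadj⟩} := by
        ext e
        simp only [Finset.mem_filter, Finset.mem_univ, true_and, Finset.mem_singleton]
        constructor
        · rintro ⟨ha, hb⟩
          exact Subtype.ext ((Sym2.mem_and_mem_iff huv).mp ⟨ha, hb⟩)
        · rintro rfl
          simp [Sym2.mem_iff]
      rw [hfil]
      simp [huv, hadj]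
    · have hfil : (Finset.univ.filter
          fun e : G.edgeSet => u ∈ (e : Sym2 V) ∧ v ∈ (e : Sym2 V)) = ∅ := by
        ext e
        simp only [Finset.mem_filter, Finset.mem_univ, true_and, Finset.notMem_empty,
          iff_false]
        rintro ⟨ha, hb⟩
        have he : (e : Sym2 V) = s(u, v) := (Sym2.mem_and_mem_iff huv).mp ⟨ha, hb⟩
        exact hadj (G.mem_edgeSet.mp (he ▸ e.2))
      rw [hfil]
      simp [huv, hadj]
lemma adj_inl_inl {V : Type*} [Fintype V] (G : SimpleGraph V) (u v : V) :
    (xyzTransform G XYZ.plus XYZ.zero XYZ.plus).Adj (Sum.inl u) (Sum.inl v) ↔ G.Adj u v :=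
  Iff.rfl

lemma adj_inl_inr {V : Type*} [Fintype V] (G : SimpleGraph V) (u : V) (f : G.edgeSet) :
    (xyzTransform G XYZ.plus XYZ.zero XYZ.plus).Adj (Sum.inl u) (Sum.inr f)
      ↔ u ∈ (f : Sym2 V) := Iff.rfl

lemma adj_inr_inl {V : Type*} [Fintype V] (G : SimpleGraph V) (e : G.edgeSet) (v : V) :
    (xyzTransform G XYZ.plus XYZ.zero XYZ.plus).Adj (Sum.inr e) (Sum.inl v)
      ↔ v ∈ (e : Sym2 V) := Iff.rfl

lemma adj_inr_inr {V : Type*} [Fintype V] (G : SimpleGraph V) (e f : G.edgeSet) :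
    (xyzTransform G XYZ.plus XYZ.zero XYZ.plus).Adj (Sum.inr e) (Sum.inr f) ↔ False :=
  Iff.rfl

lemma block_decomp {V : Type*} [Fintype V] (G : SimpleGraph V) (r : ℕ)
    (hreg : G.IsRegularOfDegree r) (lam : ℝ) :
    lam • (1 : Matrix (V ⊕ G.edgeSet) (V ⊕ G.edgeSet) ℝ)
        - signlessLaplacian (xyzTransform G XYZ.plus XYZ.zero XYZ.plus)
      = Matrix.fromBlocks ((lam - r) • 1 - signlessLaplacian G) (-(incMat G))
          (-(incMat G).transpose) ((lam - 2) • 1) := by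
  classical
  ext i j
  rcases i with u | e <;> rcases j with v | f
  · simp only [Matrix.sub_apply, Matrix.smul_apply, Matrix.one_apply, smul_eq_mul,
      signlessLaplacian, Matrix.of_apply, Matrix.fromBlocks_apply₁₁, Sum.inl.injEq,
      adj_inl_inl, aux_deg_inl, hreg u]
    split_ifs <;> push_cast <;> ring
  · simp only [Matrix.sub_apply, Matrix.smul_apply, Matrix.one_apply, smul_eq_mul,
      signlessLaplacian, Matrix.of_apply, Matrix.fromBlocks_apply₁₂, Matrix.neg_apply,
      incMat, adj_inl_inr, reduceCtorEq, if_false]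
    ring
  · simp only [Matrix.sub_apply, Matrix.smul_apply, Matrix.one_apply, smul_eq_mul,
      signlessLaplacian, Matrix.of_apply, Matrix.fromBlocks_apply₂₁, Matrix.neg_apply,
      Matrix.transpose_apply, incMat, adj_inr_inl, reduceCtorEq, if_false]
    ring
  · simp only [Matrix.sub_apply, Matrix.smul_apply, Matrix.one_apply, smul_eq_mul,
      signlessLaplacian, Matrix.of_apply, Matrix.fromBlocks_apply₂₂, Sum.inr.injEq,
      adj_inr_inr, aux_deg_inr, if_false]
    split_ifs <;> push_cast <;> ring
lemma fQ_trans_eq_det {V : Type*} [Fintype V] (G : SimpleGraph V) (lam : ℝ) :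
    fQ (xyzTransform G XYZ.plus XYZ.zero XYZ.plus) lam
    = (lam • (1 : Matrix (V ⊕ G.edgeSet) (V ⊕ G.edgeSet) ℝ)
      - signlessLaplacian (xyzTransform G XYZ.plus XYZ.zero XYZ.plus)).det := by
  unfold fQ
  congr!

lemma det_alpha_beta {V : Type*} [Fintype V] (G : SimpleGraph V) (n : ℕ)
    (hn : Fintype.card V = n) (q : Fin n → ℝ)
    (hq : ∀ x : ℝ, fQ G x = ∏ i : Fin n, (x - q i)) (α β : ℝ) :
    Matrix.det (α • (1 : Matrix V V ℝ) - β • signlessLaplacian G)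
      = ∏ i : Fin n, (α - β * q i) := by
  classical
  have hdet : Matrix.det (α • (1 : Matrix V V ℝ) - β • signlessLaplacian G)
      = ∏ i : Fin n, (α - β * q i) → True := fun _ => trivial
  clear hdet
  have hfq : ∀ x : ℝ, Matrix.det (x • (1 : Matrix V V ℝ) - signlessLaplacian G)
      = ∏ i : Fin n, (x - q i) := by
    intro x
    rw [← hq x]
    unfold fQ
    congr!
  rcases eq_or_ne β 0 with rfl | hβ
  · simp [Matrix.det_smul, hn]
  · have key : α • (1 : Matrix V V ℝ) - β • signlessLaplacian G
        = β • ((α / β) • (1 : Matrix V V ℝ) - signlessLaplacian G) := by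
      rw [smul_sub, smul_smul, mul_div_cancel₀ _ hβ]
    rw [key, Matrix.det_smul, hn, hfq]
    have : β ^ n * ∏ i : Fin n, (α / β - q i) = ∏ i : Fin n, (β * (α / β - q i)) := by
      rw [Finset.prod_mul_distrib, Finset.prod_const, Finset.card_univ, Fintype.card_fin]
    rw [this]
    exact Finset.prod_congr rfl fun i _ => by field_simp

lemma fQ_trans_ne_two {V : Type*} [Fintype V] (G : SimpleGraph V) (r n m : ℕ)
    (hn : Fintype.card V = n) (hm : Fintype.card G.edgeSet = m)
    (hreg : G.IsRegularOfDegree r) (q : Fin n → ℝ)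
    (hq : ∀ x : ℝ, fQ G x = ∏ i : Fin n, (x - q i))
    (lam : ℝ) (hl2 : lam ≠ 2) :
    fQ (xyzTransform G XYZ.plus XYZ.zero XYZ.plus) lam
      = (lam - 2) ^ m * ∏ i : Fin n, ((lam - r) - (1 + (lam - 2)⁻¹) * q i) := by
  classical
  have hsub : lam - 2 ≠ 0 := sub_ne_zero.mpr hl2
  rw [fQ_trans_eq_det, block_decomp G r hreg lam]
  letI : Invertible ((lam - 2) • (1 : Matrix G.edgeSet G.edgeSet ℝ)) :=
    ⟨(lam - 2)⁻¹ • 1, by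
        rw [smul_mul_smul_comm, one_mul, inv_mul_cancel₀ hsub, one_smul], by
        rw [smul_mul_smul_comm, one_mul, mul_inv_cancel₀ hsub, one_smul]⟩
  rw [Matrix.det_fromBlocks₂₂]
  have hinv : ⅟((lam - 2) • (1 : Matrix G.edgeSet G.edgeSet ℝ))
      = (lam - 2)⁻¹ • (1 : Matrix G.edgeSet G.edgeSet ℝ) := rfl
  rw [hinv]
  have hBDC : (-(incMat G)) * ((lam - 2)⁻¹ • (1 : Matrix G.edgeSet G.edgeSet ℝ))
        * (-(incMat G).transpose)
      = (lam - 2)⁻¹ • signlessLaplacian G := by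
    rw [Matrix.mul_smul, Matrix.mul_one, Matrix.smul_mul, Matrix.neg_mul, Matrix.mul_neg,
      neg_neg, incMat_mul_transpose]
  rw [hBDC]
  have hA : ((lam - ↑r) • (1 : Matrix V V ℝ) - signlessLaplacian G)
        - (lam - 2)⁻¹ • signlessLaplacian G
      = (lam - ↑r) • (1 : Matrix V V ℝ) - (1 + (lam - 2)⁻¹) • signlessLaplacian G := by
    rw [add_smul, one_smul, sub_sub]
  rw [hA, det_alpha_beta G n hn q hq, Matrix.det_smul, Matrix.det_one, mul_one, hm]
lemma fQ_trans_continuous {V : Type*} [Fintype V] (G : SimpleGraph V) :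
    Continuous (fun x : ℝ => fQ (xyzTransform G XYZ.plus XYZ.zero XYZ.plus) x) := by
  classical
  have hfun : (fun x : ℝ => fQ (xyzTransform G XYZ.plus XYZ.zero XYZ.plus) x)
      = fun x : ℝ => (x • (1 : Matrix (V ⊕ G.edgeSet) (V ⊕ G.edgeSet) ℝ)
          - signlessLaplacian (xyzTransform G XYZ.plus XYZ.zero XYZ.plus)).det :=
    funext fun x => fQ_trans_eq_det G x
  rw [hfun]
  exact ((continuous_id.smul continuous_const).sub continuous_const).matrix_det
theorem signless_charpoly_xyz_pz_p {V : Type*} [Fintype V] (G : SimpleGraph V) (r n m : ℕ)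
    (hn : Fintype.card V = n) (hm : Fintype.card G.edgeSet = m)
    (hreg : G.IsRegularOfDegree r) (hr2 : 2 ≤ r) (hn0 : 0 < n)
    (q : Fin n → ℝ) (hmono : Monotone q)
    (hlast : q ⟨n - 1, by omega⟩ = 2 * r)
    (hq : ∀ x : ℝ, fQ G x = ∏ i : Fin n, (x - q i)) :
    ∀ lam : ℝ,
      fQ (xyzTransform G XYZ.plus XYZ.zero XYZ.plus) lam =
        (lam ^ 2 - (2 + 3 * r) * lam + 4 * r) * (lam - 2) ^ (m - n) *
          ∏ i : Fin (n - 1), ((lam - 2) * (lam - r - (q (Fin.castLE (Nat.sub_le n 1) i))) - (q (Fin.castLE (Nat.sub_le n 1) i))) := by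
  classical
  have hnm : n ≤ m := by
    have hsum : ∑ v : V, G.degree v = 2 * G.edgeFinset.card :=
      G.sum_degrees_eq_twice_card_edges
    have hcard : G.edgeFinset.card = m := by rw [← hm]; exact Set.toFinset_card _
    have hnr : n * r = 2 * m := by
      rw [← hcard, ← hsum, Finset.sum_congr rfl fun v _ => hreg v, Finset.sum_const,
        Finset.card_univ, hn, smul_eq_mul]
    nlinarith
  have key : ∀ x : ℝ, x ≠ 2 →
      fQ (xyzTransform G XYZ.plus XYZ.zero XYZ.plus) x =
        (x ^ 2 - (2 + 3 * r) * x + 4 * r) * (x - 2) ^ (m - n) *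
          ∏ i : Fin (n - 1), ((x - 2) * (x - r - (q (Fin.castLE (Nat.sub_le n 1) i))) - (q (Fin.castLE (Nat.sub_le n 1) i))) := by
    intro x hx2
    have hsub : x - 2 ≠ 0 := sub_ne_zero.mpr hx2
    rw [fQ_trans_ne_two G r n m hn hm hreg q hq x hx2]
    have hfac : ∀ i : Fin n, (x - 2) * ((x - r) - (1 + (x - 2)⁻¹) * q i)
        = (x - 2) * (x - r - q i) - q i := fun i => by
      field_simp; ring
    obtain ⟨k, rfl⟩ : ∃ k, n = k + 1 := ⟨n - 1, by omega⟩
    have hpow : (x - 2) ^ m = (x - 2) ^ (m - (k + 1)) * (x - 2) ^ (k + 1) := by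
      rw [← pow_add]; congr 1; omega
    rw [hpow, mul_assoc]
    have hprod : (x - 2) ^ (k + 1) * (∏ i : Fin (k + 1), ((x - r) - (1 + (x - 2)⁻¹) * q i))
        = ∏ i : Fin (k + 1), ((x - 2) * (x - r - q i) - q i) := by
      rw [← Fin.prod_const (k + 1) (x - 2), ← Finset.prod_mul_distrib]
      exact Finset.prod_congr rfl fun i _ => hfac i
    have hsplit : ∀ g : Fin (k + 1) → ℝ, (∏ i : Fin (k + 1), g i)
        = (∏ i : Fin (k + 1 - 1), g (Fin.castLE (Nat.sub_le (k + 1) 1) i)) * g (Fin.last k) := by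
      intro g
      rw [Fin.prod_univ_castSucc]
      rfl
    have hlast' : q (Fin.last k) = 2 * r := by
      convert hlast using 2
      exact Fin.ext (by simp)
    rw [hprod, hsplit, hlast']
    ring
  intro lam
  have contL := fQ_trans_continuous G
  have contR : Continuous (fun x : ℝ =>
      (x ^ 2 - (2 + 3 * r) * x + 4 * r) * (x - 2) ^ (m - n) *
        ∏ i : Fin (n - 1), ((x - 2) * (x - r - (q (Fin.castLE (Nat.sub_le n 1) i))) - (q (Fin.castLE (Nat.sub_le n 1) i)))) := by
    apply Continuous.mul
    · fun_prop
    · exact continuous_finset_prod _ fun i _ => by fun_prop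
  have := Continuous.ext_on (dense_compl_singleton (2:ℝ)) contL contR
    (fun x hx => key x (Set.mem_compl_singleton_iff.mp hx))
  exact congrFun this lam
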